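/- Let K be a field of characteristic different from 2, k ≥ 1, and let A_1, ..., A_k be symmetric square matrices over K with A_i of size n_i × n_i (each n_i ≥ 1), and set r_k = rank(A_k) and s = n_1 + ... + n_{k-1}. If n_k − r_k ≥ s, then there exists a symmetric completion M of the block diagonal partial matrix diag(A_1, ..., A_k) with rank(M) = 2s + r_k. -/

import Mathlib

open Matrix

/-- `M` is a completion of the block diagonal partial matrix
`diag (A 0, ..., A k)`: its `(i,i)` diagonal block equals `A i` for every `i`. -/
def IsCompletion {K : Type*} [Field K] {k : ℕ} {n : Fin k → ℕ}
    (A : ∀ i : Fin k, Matrix (Fin (n i)) (Fin (n i)) K)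
    (M : Matrix (Σ i : Fin k, Fin (n i)) (Σ i : Fin k, Fin (n i)) K) : Prop :=
  ∀ (i : Fin k) (x y : Fin (n i)), M ⟨i, x⟩ ⟨i, y⟩ = A i x y

section Helpers

variable {K : Type*} [Field K]

lemma finrank_prod_submodule {M M' : Type*} [AddCommGroup M] [AddCommGroup M']
    [Module K M] [Module K M'] [FiniteDimensional K M] [FiniteDimensional K M']
    (p : Submodule K M) (q : Submodule K M') :
    Module.finrank K (p.prod q) = Module.finrank K p + Module.finrank K q := by
  rw [LinearMap.prod_eq_sup_map]
  have h1 : Module.finrank K (p.map (LinearMap.inl K M M')) = Module.finrank K p :=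
    ((Submodule.equivMapOfInjective _ LinearMap.inl_injective p).finrank_eq).symm
  have h2 : Module.finrank K (q.map (LinearMap.inr K M M')) = Module.finrank K q :=
    ((Submodule.equivMapOfInjective _ LinearMap.inr_injective q).finrank_eq).symm
  have hinf : p.map (LinearMap.inl K M M') ⊓ q.map (LinearMap.inr K M M') = ⊥ := by
    rw [Submodule.eq_bot_iff]
    rintro ⟨x, y⟩ hxy
    rw [Submodule.mem_inf] at hxy
    obtain ⟨hx, hy⟩ := hxy
    simp only [Submodule.mem_map, LinearMap.coe_inl, LinearMap.coe_inr, Prod.mk.injEq] at hx hy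
    obtain ⟨a, -, rfl, rfl⟩ := hx
    obtain ⟨b, -, rfl, -⟩ := hy
    rfl
  have := Submodule.finrank_sup_add_finrank_inf_eq (p.map (LinearMap.inl K M M'))
    (q.map (LinearMap.inr K M M'))
  rw [hinf] at this
  simp only [finrank_bot, add_zero] at this
  omega

lemma range_prodMap' {M M₂ M₃ M₄ : Type*} [AddCommGroup M] [AddCommGroup M₂] [AddCommGroup M₃]
    [AddCommGroup M₄] [Module K M] [Module K M₂] [Module K M₃] [Module K M₄]
    (f : M →ₗ[K] M₂) (g : M₃ →ₗ[K] M₄) :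
    LinearMap.range (f.prodMap g) = (LinearMap.range f).prod (LinearMap.range g) := by
  ext ⟨x, y⟩
  simp only [LinearMap.mem_range, Submodule.mem_prod, LinearMap.prodMap_apply, Prod.mk.injEq,
    Prod.exists]
  exact ⟨fun ⟨a, b, h1, h2⟩ => ⟨⟨a, h1⟩, ⟨b, h2⟩⟩, fun ⟨⟨a, h1⟩, ⟨b, h2⟩⟩ => ⟨a, b, h1, h2⟩⟩

lemma mulVecLin_fromBlocks_diag {l o : Type*} [Fintype l] [Fintype o]
    (A : Matrix l l K) (D : Matrix o o K) :
    (fromBlocks A 0 0 D).mulVecLin =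
      ((LinearEquiv.sumArrowLequivProdArrow l o K K).symm.toLinearMap.comp
        ((A.mulVecLin.prodMap D.mulVecLin).comp
          (LinearEquiv.sumArrowLequivProdArrow l o K K).toLinearMap)) := by
  apply LinearMap.ext
  intro v
  simp only [mulVecLin_apply, LinearMap.coe_comp, LinearEquiv.coe_coe, Function.comp_apply,
    LinearMap.prodMap_apply, mulVecLin_apply]
  conv_lhs => rw [← Sum.elim_comp_inl_inr v]
  rw [fromBlocks_mulVec]
  ext c
  cases c <;>
    simp [LinearEquiv.sumArrowLequivProdArrow, Equiv.sumArrowEquivProdArrow, Sum.elim_comp_inl_inr]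

lemma rank_fromBlocks_diag {l o : Type*} [Fintype l] [Fintype o]
    (A : Matrix l l K) (D : Matrix o o K) :
    (fromBlocks A 0 0 D).rank = A.rank + D.rank := by
  rw [Matrix.rank, mulVecLin_fromBlocks_diag]
  rw [LinearMap.range_comp, LinearMap.range_comp_of_range_eq_top _ (LinearEquiv.range _),
    range_prodMap', LinearEquiv.finrank_map_eq, finrank_prod_submodule]
  rfl

lemma isUnit_det_of_rank_eq_card {o : Type*} [Fintype o] [DecidableEq o]
    (D : Matrix o o K) (h : D.rank = Fintype.card o) : IsUnit D.det := by
  rw [isUnit_iff_ne_zero]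
  intro hdet
  obtain ⟨v, hv, hDv⟩ := (Matrix.exists_mulVec_eq_zero_iff.mpr hdet)
  have hker : v ∈ LinearMap.ker D.mulVecLin := by simpa [Matrix.mulVecLin_apply] using hDv
  have h1 := LinearMap.finrank_range_add_finrank_ker D.mulVecLin
  rw [show Module.finrank K (LinearMap.range D.mulVecLin) = D.rank from rfl, h] at h1
  simp only [Module.finrank_pi, Fintype.card] at h1
  have hker0 : LinearMap.ker D.mulVecLin = ⊥ := by
    have : Module.finrank K (LinearMap.ker D.mulVecLin) = 0 := by
      have h2 : Module.finrank K (o → K) = Fintype.card o := Module.finrank_pi K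
      omega
    exact Submodule.finrank_eq_zero.mp this
  rw [hker0] at hker
  exact hv (by simpa using hker)

lemma rank_core {α : Type*} [Fintype α] [DecidableEq α] {r m : ℕ}
    (B : Matrix α α K) (hB : Bᵀ = B)
    (D : Matrix (Fin r) (Fin r) K) (hDdet : IsUnit D.det)
    (ι : α → Fin m) (hι : Function.Injective ι) (h2 : (2 : K) ≠ 0) :
    (fromBlocks B (Matrix.of fun a c => if c = Sum.inr (ι a) then (1 : K) else 0)
      (Matrix.of fun a c => if c = Sum.inr (ι a) then (1 : K) else 0)ᵀ
      (fromBlocks D 0 0 0)).rank = 2 * Fintype.card α + r := by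
  classical
  set J : Matrix α (Fin r ⊕ Fin m) K :=
    Matrix.of fun a c => if c = Sum.inr (ι a) then (1 : K) else 0 with hJdef
  set A₁ : Matrix (Fin r ⊕ Fin m) (Fin r ⊕ Fin m) K := fromBlocks D 0 0 0 with hA₁def
  have hJJT : J * Jᵀ = 1 := by
    ext a a'
    rw [mul_apply]
    rw [Finset.sum_eq_single (Sum.inr (ι a))]
    · by_cases hak : a = a'
      · subst hak; simp [hJdef]
      · simp only [hJdef, of_apply, transpose_apply, one_apply, if_neg hak,
          Sum.inr.injEq, if_true]
        rw [if_neg (fun h : ι a = ι a' => hak (hι h))]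
        ring
    · intro c _ hc
      simp [hJdef, hc]
    · simp
  have hJA₁ : J * A₁ = 0 := by
    ext a c'
    rw [mul_apply, Finset.sum_eq_single (Sum.inr (ι a))]
    · cases c' <;> simp [hA₁def, fromBlocks]
    · intro c _ hc; simp [hJdef, hc]
    · simp
  have hA₁JT : A₁ * Jᵀ = 0 := by
    ext c a
    rw [mul_apply, Finset.sum_eq_single (Sum.inr (ι a))]
    · cases c <;> simp [hA₁def, fromBlocks]
    · intro c' _ hc; simp [hJdef, hc]
    · simp
  -- the diagonal indicator
  set g : Fin m → K := fun b => if b ∈ Finset.univ.image ι then (1 : K) else 0 with hgdef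
  have hJTJ : Jᵀ * J = fromBlocks 0 0 0 (diagonal g) := by
    ext c c'
    rw [mul_apply]
    rcases c with b | b
    · have : ∀ a : α, Jᵀ (Sum.inl b) a * J a c' = 0 := by
        intro a; simp [hJdef]
      rw [Finset.sum_congr rfl fun a _ => this a]
      rcases c' with b' | b' <;> simp [fromBlocks]
    · rcases c' with b' | b'
      · have : ∀ a : α, Jᵀ (Sum.inr b) a * J a (Sum.inl b') = 0 := by
          intro a; simp [hJdef]
        rw [Finset.sum_congr rfl fun a _ => this a]
        simp [fromBlocks]
      · by_cases hbb : b = b'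
        · subst hbb
          by_cases hmem : b ∈ Finset.univ.image ι
          · obtain ⟨a₀, -, rfl⟩ := Finset.mem_image.mp hmem
            rw [Finset.sum_eq_single a₀]
            · simp [hJdef, fromBlocks, diagonal, hgdef, hmem]
            · intro a _ ha
              simp only [hJdef, transpose_apply, of_apply, Sum.inr.injEq]
              rw [if_neg (fun h : ι a₀ = ι a => ha (hι h).symm)]
              ring
            · simp
          · have : ∀ a : α, Jᵀ (Sum.inr b) a * J a (Sum.inr b) = 0 := by
              intro a
              have : ¬ b = ι a := fun h => hmem (Finset.mem_image.mpr ⟨a, Finset.mem_univ a, h.symm⟩)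
              simp [hJdef, this]
            rw [Finset.sum_congr rfl fun a _ => this a]
            simp only [fromBlocks, diagonal, hgdef, Sum.elim_inr, of_apply, Finset.sum_const_zero]
            rw [if_pos trivial, if_neg hmem]
        · have : ∀ a : α, Jᵀ (Sum.inr b) a * J a (Sum.inr b') = 0 := by
            intro a
            simp only [hJdef, transpose_apply, of_apply, Sum.inr.injEq]
            by_cases h1 : b = ι a
            · rw [if_pos h1, if_neg (fun h : b' = ι a => hbb (h1.trans h.symm))]; ring
            · rw [if_neg h1]; ring
          rw [Finset.sum_congr rfl fun a _ => this a]
          simp [fromBlocks, diagonal, hgdef, hbb]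
  have hgrank : (diagonal g).rank = Fintype.card α := by
    rw [rank_diagonal]
    have : ∀ b : Fin m, g b ≠ 0 ↔ b ∈ Finset.univ.image ι := by
      intro b
      by_cases hb : b ∈ Finset.univ.image ι <;> simp only [hgdef, hb, if_true, if_false] <;>
        simp [hb]
    rw [Fintype.card_congr (Equiv.subtypeEquivRight this)]
    rw [Fintype.card_coe, Finset.card_image_of_injective _ hι, Finset.card_univ]
  set N : Matrix (α ⊕ (Fin r ⊕ Fin m)) (α ⊕ (Fin r ⊕ Fin m)) K := fromBlocks 0 J Jᵀ A₁ with hNdef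
  have hA₁sq : A₁ * A₁ = fromBlocks (D * D) 0 0 0 := by
    rw [hA₁def, fromBlocks_multiply]
    simp
  have hsq : N * N = fromBlocks 1 0 0 (fromBlocks (D * D) 0 0 (diagonal g)) := by
    rw [hNdef, fromBlocks_multiply, hJJT, hJA₁, hA₁JT, hJTJ, hA₁sq]
    rw [fromBlocks_add]
    simp [Matrix.zero_mul, Matrix.mul_zero]
  have hDDrank : (D * D).rank = r := by
    rw [rank_mul_eq_left_of_isUnit_det D D hDdet, rank_of_isUnit D (isUnit_iff_isUnit_det D |>.mpr hDdet)]
    simp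
  have hNsqrank : (N * N).rank = 2 * Fintype.card α + r := by
    rw [hsq, rank_fromBlocks_diag, rank_fromBlocks_diag, hDDrank, hgrank, rank_one]
    ring
  have hlower : 2 * Fintype.card α + r ≤ N.rank := by
    rw [← hNsqrank]; exact rank_mul_le_left N N
  -- upper bound via factorization
  have hupper : N.rank ≤ 2 * Fintype.card α + r := by
    set K₁ : Matrix (Fin r ⊕ Fin m) (Fin r) K :=
      fromRows (1 : Matrix (Fin r) (Fin r) K) (0 : Matrix (Fin m) (Fin r) K) with hK₁def
    set Dr : Matrix (Fin r) (Fin r ⊕ Fin m) K :=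
      fromCols D (0 : Matrix (Fin r) (Fin m) K) with hDrdef
    have hA₁fact : K₁ * Dr = A₁ := by
      rw [hK₁def, hDrdef, fromRows_mul, Matrix.one_mul, Matrix.zero_mul, hA₁def]
      rw [show (0 : Matrix (Fin m) (Fin r ⊕ Fin m) K) =
        fromCols (0 : Matrix (Fin m) (Fin r) K) (0 : Matrix (Fin m) (Fin m) K) by
          ext c (j|j) <;> simp [fromCols]]
      rw [fromRows_fromCols_eq_fromBlocks]
    set F : Matrix (α ⊕ (Fin r ⊕ Fin m)) (α ⊕ (α ⊕ Fin r)) K :=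
      fromBlocks 1 0 0 (fromCols Jᵀ K₁) with hFdef
    set G : Matrix (α ⊕ (α ⊕ Fin r)) (α ⊕ (Fin r ⊕ Fin m)) K :=
      fromBlocks 0 J (fromRows 1 0) (fromRows 0 Dr) with hGdef
    have hFG : F * G = N := by
      rw [hFdef, hGdef, fromBlocks_multiply]
      rw [fromCols_mul_fromRows, fromCols_mul_fromRows]
      simp only [Matrix.one_mul, Matrix.zero_mul, Matrix.mul_zero, Matrix.mul_one,
        add_zero, zero_add, hA₁fact, hNdef]
    calc N.rank = (F * G).rank := by rw [hFG]
    _ ≤ F.rank := rank_mul_le_left F G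
    _ ≤ Fintype.card (α ⊕ (α ⊕ Fin r)) := rank_le_card_width F
    _ = 2 * Fintype.card α + r := by simp; ring
  have hNrank : N.rank = 2 * Fintype.card α + r := le_antisymm hupper hlower
  -- congruence to add B in the corner
  set X : Matrix (Fin r ⊕ Fin m) α K := Jᵀ * ((2 : K)⁻¹ • B) with hXdef
  set T : Matrix (α ⊕ (Fin r ⊕ Fin m)) (α ⊕ (Fin r ⊕ Fin m)) K := fromBlocks 1 0 X 1 with hTdef
  have hTdet : IsUnit T.det := by
    rw [hTdef, det_fromBlocks_zero₁₂]
    simp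
  have hTtrans : Tᵀ = fromBlocks 1 Xᵀ 0 1 := by
    rw [hTdef, fromBlocks_transpose]
    simp
  have hJX : J * X = (2 : K)⁻¹ • B := by
    rw [hXdef, ← Matrix.mul_assoc, hJJT, Matrix.one_mul]
  have hA₁X : A₁ * X = 0 := by
    rw [hXdef, ← Matrix.mul_assoc, hA₁JT, Matrix.zero_mul]
  have hXTJT : Xᵀ * Jᵀ = (2 : K)⁻¹ • B := by
    rw [← transpose_mul, hJX, transpose_smul, hB]
  have hXTA₁ : Xᵀ * A₁ = 0 := by
    rw [hXdef, transpose_mul, Matrix.transpose_transpose, transpose_smul,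
      Matrix.mul_assoc, hJA₁, Matrix.mul_zero]
  have hhalf : (2 : K)⁻¹ • B + (2 : K)⁻¹ • B = B := by
    rw [← add_smul]
    norm_num
    rw [show ((2:K))⁻¹ + 2⁻¹ = 2⁻¹ * 2 by ring, inv_mul_cancel₀ h2, one_smul]
  have hTNT : Tᵀ * (N * T) = fromBlocks B J Jᵀ A₁ := by
    rw [hNdef, hTdef, hTtrans, fromBlocks_multiply, fromBlocks_multiply]
    simp only [Matrix.one_mul, Matrix.mul_one, Matrix.zero_mul, Matrix.mul_zero,
      add_zero, zero_add, hJX, hA₁X, hXTJT, hXTA₁]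
    rw [hhalf]
  have : (fromBlocks B J Jᵀ A₁).rank = N.rank := by
    rw [← hTNT, rank_mul_eq_right_of_isUnit_det Tᵀ (N * T) (by rwa [det_transpose]),
      rank_mul_eq_left_of_isUnit_det T N hTdet]
  rw [this, hNrank]

lemma exists_completion_block {α : Type*} [Fintype α] [DecidableEq α] {nl : ℕ}
    (B : Matrix α α K) (hB : Bᵀ = B)
    (A : Matrix (Fin nl) (Fin nl) K) (hA : Aᵀ = A)
    (hcard : Fintype.card α ≤ nl - A.rank) (h2 : (2 : K) ≠ 0) :
    ∃ C : Matrix α (Fin nl) K,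
      (fromBlocks B C Cᵀ A).rank = 2 * Fintype.card α + A.rank := by
  classical
  set r := A.rank with hrdef
  have hrle : r ≤ nl := by
    have := A.rank_le_card_width
    simpa using this
  set m := nl - r with hmdef
  have hnl : r + m = nl := by omega
  set eγ : (Fin r ⊕ Fin m) ≃ Fin nl := finSumFinEquiv.trans (finCongr hnl) with heγ
  set A₀ : Matrix (Fin r ⊕ Fin m) (Fin r ⊕ Fin m) K := A.submatrix eγ eγ with hA₀def
  have hA₀symm : A₀ᵀ = A₀ := by rw [hA₀def, transpose_submatrix, hA]
  have hA₀rank : A₀.rank = r := by rw [hA₀def, rank_submatrix]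
  -- find a basis adapted to the kernel
  set f := A₀.mulVecLin with hfdef
  have hrange : Module.finrank K (LinearMap.range f) = r := hA₀rank
  have hVdim : Module.finrank K ((Fin r ⊕ Fin m) → K) = r + m := by
    simp [Module.finrank_pi]
  have hkerdim : Module.finrank K (LinearMap.ker f) = m := by
    have := LinearMap.finrank_range_add_finrank_ker f
    omega
  obtain ⟨W, hW⟩ := Submodule.exists_isCompl (LinearMap.ker f)
  have hWdim : Module.finrank K W = r := by
    have := Submodule.finrank_add_eq_of_isCompl hW
    omega
  set bW : Module.Basis (Fin r) K W := (Module.finBasis K W).reindex (finCongr hWdim) with hbW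
  set bk : Module.Basis (Fin m) K (LinearMap.ker f) :=
    (Module.finBasis K (LinearMap.ker f)).reindex (finCongr hkerdim) with hbk
  set bV : Module.Basis (Fin r ⊕ Fin m) K ((Fin r ⊕ Fin m) → K) :=
    (bW.prod bk).map (Submodule.prodEquivOfIsCompl W (LinearMap.ker f) hW.symm) with hbV
  have hbVinr : ∀ b : Fin m, A₀ *ᵥ (bV (Sum.inr b)) = 0 := by
    intro b
    have h1 : bV (Sum.inr b) = ((bW.prod bk) (Sum.inr b)).1.1 + ((bW.prod bk) (Sum.inr b)).2.1 := by
      rw [hbV, Module.Basis.map_apply, Submodule.coe_prodEquivOfIsCompl']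
    have h2' : bV (Sum.inr b) = (bk b : (Fin r ⊕ Fin m) → K) := by
      rw [h1, Module.Basis.prod_apply_inr_fst, Module.Basis.prod_apply_inr_snd]
      simp
    have : bV (Sum.inr b) ∈ LinearMap.ker f := by rw [h2']; exact (bk b).2
    simpa [hfdef, Matrix.mulVecLin_apply] using this
  set P : Matrix (Fin r ⊕ Fin m) (Fin r ⊕ Fin m) K :=
    (Pi.basisFun K (Fin r ⊕ Fin m)).toMatrix bV with hPdef
  have hPinv : Invertible P := (Pi.basisFun K (Fin r ⊕ Fin m)).invertibleToMatrix bV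
  have hPdet : IsUnit P.det := (Matrix.isUnit_iff_isUnit_det P).mp (isUnit_of_invertible P)
  have hPapp : ∀ c j, P c j = bV j c := by
    intro c j
    rw [hPdef, Module.Basis.toMatrix_apply, Pi.basisFun_repr]
  have hcolker : ∀ b : Fin m, A₀ *ᵥ (fun c => P c (Sum.inr b)) = 0 := by
    intro b
    have : (fun c => P c (Sum.inr b)) = bV (Sum.inr b) := by
      funext c; rw [hPapp]
    rw [this]; exact hbVinr b
  -- entry formula for Pᵀ * A₀ * P
  have hentry : ∀ c c', (Pᵀ * A₀ * P) c c' =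
      (fun d => P d c) ⬝ᵥ (A₀ *ᵥ (fun d => P d c')) := by
    intro c c'
    rw [Matrix.mul_assoc, mul_apply]
    simp only [transpose_apply, dotProduct, mulVec, mul_apply, dotProduct]
  set D : Matrix (Fin r) (Fin r) K :=
    Matrix.of (fun i j => (Pᵀ * A₀ * P) (Sum.inl i) (Sum.inl j)) with hDdef
  have hA₁ : Pᵀ * A₀ * P = fromBlocks D 0 0 0 := by
    ext c c'
    rcases c' with j | b
    · rcases c with i | b'
      · simp [hDdef, fromBlocks]
      · rw [hentry]
        have : (fun d => P d (Sum.inr b')) ⬝ᵥ (A₀ *ᵥ (fun d => P d (Sum.inl j))) =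
            (A₀ *ᵥ (fun d => P d (Sum.inr b'))) ⬝ᵥ (fun d => P d (Sum.inl j)) := by
          rw [dotProduct_mulVec, ← Matrix.mulVec_transpose, hA₀symm]
        rw [this, hcolker, zero_dotProduct]
        simp [fromBlocks]
    · rw [hentry, hcolker, dotProduct_zero]
      rcases c with i | b' <;> simp [fromBlocks]
  have hA₁rank : (fromBlocks D 0 0 0 :
      Matrix (Fin r ⊕ Fin m) (Fin r ⊕ Fin m) K).rank = r := by
    rw [← hA₁, Matrix.mul_assoc,
      rank_mul_eq_right_of_isUnit_det Pᵀ (A₀ * P) (by rwa [det_transpose]),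
      rank_mul_eq_left_of_isUnit_det P A₀ hPdet, hA₀rank]
  have hDrank : D.rank = r := by
    have := rank_fromBlocks_diag D (0 : Matrix (Fin m) (Fin m) K)
    rw [hA₁rank] at this
    simp only [rank_zero, add_zero] at this
    omega
  have hDdet : IsUnit D.det := isUnit_det_of_rank_eq_card D (by simpa using hDrank)
  -- the embedding of α into Fin m
  have hcard' : Fintype.card α ≤ m := hcard
  set ι : α → Fin m := fun a => Fin.castLE hcard' ((Fintype.equivFin α) a) with hι
  have hιinj : Function.Injective ι := fun a b hab => by
    apply (Fintype.equivFin α).injective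
    exact Fin.castLE_injective hcard' hab
  set J : Matrix α (Fin r ⊕ Fin m) K :=
    Matrix.of fun a c => if c = Sum.inr (ι a) then (1 : K) else 0 with hJdef
  have hcore := rank_core B hB D hDdet ι hιinj h2
  -- transfer along the congruence by Q = fromBlocks 1 0 0 P
  set C' : Matrix α (Fin r ⊕ Fin m) K := J * P⁻¹ with hC'def
  have hCP : C' * P = J := by
    rw [hC'def, Matrix.mul_assoc, nonsing_inv_mul P hPdet, Matrix.mul_one]
  set Q : Matrix ((α ⊕ (Fin r ⊕ Fin m))) ((α ⊕ (Fin r ⊕ Fin m))) K :=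
    fromBlocks 1 0 0 P with hQdef
  have hQdet : IsUnit Q.det := by
    rw [hQdef, det_fromBlocks_zero₁₂]
    simpa using hPdet
  have hQtrans : Qᵀ = fromBlocks 1 0 0 Pᵀ := by
    rw [hQdef, fromBlocks_transpose]; simp
  have hQNQ : Qᵀ * (fromBlocks B C' C'ᵀ A₀ * Q) = fromBlocks B J Jᵀ (fromBlocks D 0 0 0) := by
    rw [hQtrans, hQdef, fromBlocks_multiply, fromBlocks_multiply]
    simp only [Matrix.one_mul, Matrix.mul_one, Matrix.zero_mul, Matrix.mul_zero,
      add_zero, zero_add, hCP]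
    rw [← Matrix.transpose_mul, hCP, ← Matrix.mul_assoc, hA₁]
  have hrankN : (fromBlocks B C' C'ᵀ A₀).rank = 2 * Fintype.card α + r := by
    rw [← hcore, ← hQNQ,
      rank_mul_eq_right_of_isUnit_det Qᵀ _ (by rwa [det_transpose]),
      rank_mul_eq_left_of_isUnit_det Q _ hQdet]
  -- back to Fin nl coordinates
  refine ⟨C'.submatrix id (⇑eγ.symm), ?_⟩
  have hsub : fromBlocks B (C'.submatrix id ⇑eγ.symm) (C'.submatrix id ⇑eγ.symm)ᵀ A =
      (fromBlocks B C' C'ᵀ A₀).submatrix (⇑(Equiv.sumCongr (Equiv.refl α) eγ.symm))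
        (⇑(Equiv.sumCongr (Equiv.refl α) eγ.symm)) := by
    ext p q
    rcases p with a | x <;> rcases q with a' | y <;>
      simp [fromBlocks, submatrix, hA₀def]
  rw [hsub, rank_submatrix]
  exact hrankN

end Helpers

def splitEquiv {k : ℕ} (n : Fin (k + 1) → ℕ) :
    (Σ i : Fin (k + 1), Fin (n i)) ≃ ((Σ i : Fin k, Fin (n i.castSucc)) ⊕ Fin (n (Fin.last k))) where
  toFun p := Fin.lastCases (motive := fun i => Fin (n i) → _)
    (fun x => Sum.inr x) (fun j x => Sum.inl ⟨j, x⟩) p.1 p.2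
  invFun q := q.elim (fun p => ⟨p.1.castSucc, p.2⟩) (fun x => ⟨Fin.last k, x⟩)
  left_inv := by
    rintro ⟨i, x⟩
    induction i using Fin.lastCases with
    | last => simp
    | cast j => simp
  right_inv := by rintro (⟨j, x⟩ | x) <;> simp

/-- There are `k+1` symmetric blocks `A 0, ..., A (Fin.last k)` over a field of
characteristic `≠ 2`, with nonzero sizes; `s = n 0 + ⋯ + n (k-1)`. If
`n (last) - rank (A (last)) ≥ s`, there is a symmetric completion of rank
`2 s + rank (A (last))`. -/
theorem stmt_16 {K : Type*} [Field K] (hchar : ringChar K ≠ 2)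
    {k : ℕ} {n : Fin (k + 1) → ℕ} (hn : ∀ i, 0 < n i)
    (A : ∀ i : Fin (k + 1), Matrix (Fin (n i)) (Fin (n i)) K)
    (hsymm : ∀ i, (A i)ᵀ = A i)
    (h : (∑ i : Fin k, n i.castSucc) ≤ n (Fin.last k) - (A (Fin.last k)).rank) :
    ∃ M, IsCompletion A M ∧ M = Mᵀ ∧
      M.rank = 2 * (∑ i : Fin k, n i.castSucc) + (A (Fin.last k)).rank := by
  classical
  have h2 : (2 : K) ≠ 0 := Ring.two_ne_zero hchar
  set α := (Σ i : Fin k, Fin (n i.castSucc)) with hα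
  have hcardα : Fintype.card α = ∑ i : Fin k, n i.castSucc := by
    simp [hα, Fintype.card_sigma]
  set B : Matrix α α K := blockDiagonal' (fun i => A i.castSucc) with hBdef
  have hB : Bᵀ = B := by
    rw [hBdef, blockDiagonal'_transpose]
    have heq : (fun i : Fin k => (A i.castSucc)ᵀ) = fun i : Fin k => A i.castSucc :=
      funext fun i => hsymm i.castSucc
    rw [heq]
  obtain ⟨C, hC⟩ := exists_completion_block B hB (A (Fin.last k)) (hsymm _)
    (by rw [hcardα]; exact h) h2
  set e := splitEquiv n with hedef
  set N := fromBlocks B C Cᵀ (A (Fin.last k)) with hNdef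
  refine ⟨N.submatrix e e, ?_, ?_, ?_⟩
  · intro i x y
    induction i using Fin.lastCases with
    | last =>
      have hx : e ⟨Fin.last k, x⟩ = Sum.inr x := by simp [hedef, splitEquiv]
      have hy : e ⟨Fin.last k, y⟩ = Sum.inr y := by simp [hedef, splitEquiv]
      rw [submatrix_apply, hx, hy, hNdef, fromBlocks_apply₂₂]
    | cast j =>
      have hx : e ⟨j.castSucc, x⟩ = Sum.inl ⟨j, x⟩ := by simp [hedef, splitEquiv]
      have hy : e ⟨j.castSucc, y⟩ = Sum.inl ⟨j, y⟩ := by simp [hedef, splitEquiv]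
      rw [submatrix_apply, hx, hy, hNdef, fromBlocks_apply₁₁, hBdef]
      exact blockDiagonal'_apply_eq _ _ _ _
  · have hNsymm : Nᵀ = N := by
      rw [hNdef, fromBlocks_transpose, hB, transpose_transpose, hsymm]
    conv_rhs => rw [transpose_submatrix, hNsymm]
  · rw [show N.submatrix ⇑e ⇑e = N.submatrix ⇑(e : _ ≃ _) ⇑(e : _ ≃ _) from rfl,
      rank_submatrix N e e, hNdef, hC, hcardα]
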